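/- Let α>0, ω>0 with 2ω<α. With h₁(t) = (1/2)(1 + sqrt(1 − 8αt² + 8ωt)) and h₂(t) = ωt/((α+2)t − 2), the derivative of t ↦ h₁(h₂(t)) is strictly less than 1 for all t > 1. Consequently the inequality t ≤ h₁(h₂(t)) has no solution with t > 1. -/

import Mathlib

theorem stmt_12 (α ω : ℝ) (hα : 0 < α) (hω : 0 < ω) (hcond : 2 * ω < α) :
    let h₁ : ℝ → ℝ := fun t => 1 / 2 * (1 + Real.sqrt (1 - 8 * α * t ^ 2 + 8 * ω * t))
    let h₂ : ℝ → ℝ := fun t => ω * t / ((α + 2) * t - 2)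
    (∀ t : ℝ, 1 < t → deriv (fun s => h₁ (h₂ s)) t < 1) ∧
    (∀ t : ℝ, 1 < t → ¬ t ≤ h₁ (h₂ t)) := by
  intro h₁ h₂
  constructor
  · intro t ht
    have hd : α < (α + 2) * t - 2 := by nlinarith
    have hd0 : (α + 2) * t - 2 ≠ 0 := by nlinarith
    set d : ℝ := (α + 2) * t - 2 with hd_def
    set x : ℝ := ω * t / d with hx_def
    have hxd : x * d = ω * t := by rw [hx_def]; exact div_mul_cancel₀ _ hd0
    have hx_pos : 0 < x := by
      apply div_pos (by positivity); nlinarith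
    have hax : α * x < ω := by nlinarith [mul_pos hx_pos (show (0:ℝ) < d by nlinarith)]
    have hg1 : (1:ℝ) < 1 - 8 * α * x ^ 2 + 8 * ω * x := by nlinarith
    set gval : ℝ := 1 - 8 * α * x ^ 2 + 8 * ω * x with hg_def
    have hg0 : 0 < gval := by linarith
    set S : ℝ := Real.sqrt gval with hS_def
    have hS1 : 1 < S := by
      nlinarith [Real.sq_sqrt hg0.le, Real.sqrt_nonneg gval]
    have hnum : HasDerivAt (fun s : ℝ => ω * s) (ω * 1) t := (hasDerivAt_id t).const_mul ω
    have hden : HasDerivAt (fun s : ℝ => (α + 2) * s - 2) ((α + 2) * 1) t :=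
      ((hasDerivAt_id t).const_mul (α + 2)).sub_const 2
    have hX : HasDerivAt (fun s : ℝ => ω * s / ((α + 2) * s - 2))
        ((ω * 1 * d - ω * t * ((α + 2) * 1)) / d ^ 2) t := hnum.div hden hd0
    have hX2 : HasDerivAt (fun s : ℝ => (ω * s / ((α + 2) * s - 2)) ^ 2)
        (2 * x ^ 1 * ((ω * 1 * d - ω * t * ((α + 2) * 1)) / d ^ 2)) t := by
      have := hX.fun_pow 2
      simpa [hx_def, hd_def] using this
    have hg : HasDerivAt (fun s : ℝ => 1 - 8 * α * (ω * s / ((α + 2) * s - 2)) ^ 2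
        + 8 * ω * (ω * s / ((α + 2) * s - 2)))
        (-(8 * α * (2 * x ^ 1 * ((ω * 1 * d - ω * t * ((α + 2) * 1)) / d ^ 2)))
          + 8 * ω * ((ω * 1 * d - ω * t * ((α + 2) * 1)) / d ^ 2)) t := by
      exact ((hX2.const_mul (8 * α)).const_sub 1).add (hX.const_mul (8 * ω))
    have hgx : gval ≠ 0 := ne_of_gt hg0
    have hsq : HasDerivAt (fun s : ℝ => Real.sqrt (1 - 8 * α * (ω * s / ((α + 2) * s - 2)) ^ 2
        + 8 * ω * (ω * s / ((α + 2) * s - 2))))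
        ((-(8 * α * (2 * x ^ 1 * ((ω * 1 * d - ω * t * ((α + 2) * 1)) / d ^ 2)))
          + 8 * ω * ((ω * 1 * d - ω * t * ((α + 2) * 1)) / d ^ 2)) / (2 * S)) t := by
      have := hg.sqrt hgx
      simpa [hS_def] using this
    have hfull : HasDerivAt (fun s : ℝ => 1 / 2 * (1 + Real.sqrt (1 - 8 * α * (ω * s / ((α + 2) * s - 2)) ^ 2
        + 8 * ω * (ω * s / ((α + 2) * s - 2)))))
        (1 / 2 * ((-(8 * α * (2 * x ^ 1 * ((ω * 1 * d - ω * t * ((α + 2) * 1)) / d ^ 2)))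
          + 8 * ω * ((ω * 1 * d - ω * t * ((α + 2) * 1)) / d ^ 2)) / (2 * S))) t :=
      (hsq.const_add 1).const_mul (1 / 2)
    have hderiv : deriv (fun s => h₁ (h₂ s)) t
        = 1 / 2 * ((-(8 * α * (2 * x ^ 1 * ((ω * 1 * d - ω * t * ((α + 2) * 1)) / d ^ 2)))
          + 8 * ω * ((ω * 1 * d - ω * t * ((α + 2) * 1)) / d ^ 2)) / (2 * S)) := by
      have := hfull.deriv
      rw [← this]
    rw [hderiv]
    have hx' : (ω * 1 * d - ω * t * ((α + 2) * 1)) / d ^ 2 = -2 * ω / d ^ 2 := by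
      rw [hd_def]; ring
    rw [hx']
    have hS0 : S ≠ 0 := by positivity
    have hE : 1 / 2 * ((-(8 * α * (2 * x ^ 1 * (-2 * ω / d ^ 2)))
          + 8 * ω * (-2 * ω / d ^ 2)) / (2 * S))
        = 4 * ω * (2 * α * x - ω) / (d ^ 2 * S) := by
      field_simp
      ring
    rw [hE, div_lt_one (by positivity)]
    have hd2 : α ^ 2 < d ^ 2 := by nlinarith
    nlinarith [mul_pos (show (0:ℝ) < d ^ 2 by positivity) (sub_pos.mpr hS1),
      mul_pos hω hω, mul_pos hω hα]
  · intro t ht hle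
    have hdpos : (0:ℝ) < (α + 2) * t - 2 := by nlinarith
    have hd0 : (α + 2) * t - 2 ≠ 0 := ne_of_gt hdpos
    have hkey : Real.sqrt (1 - 8 * α * (ω * t / ((α + 2) * t - 2)) ^ 2
        + 8 * ω * (ω * t / ((α + 2) * t - 2))) < 2 * t - 1 := by
      rw [Real.sqrt_lt' (by linarith)]
      have key : (1 - 8 * α * (ω * t / ((α + 2) * t - 2)) ^ 2
          + 8 * ω * (ω * t / ((α + 2) * t - 2))) * ((α + 2) * t - 2) ^ 2
          < (2 * t - 1) ^ 2 * ((α + 2) * t - 2) ^ 2 := by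
        have e : (1 - 8 * α * (ω * t / ((α + 2) * t - 2)) ^ 2
            + 8 * ω * (ω * t / ((α + 2) * t - 2))) * ((α + 2) * t - 2) ^ 2
            = ((α + 2) * t - 2) ^ 2 - 8 * α * (ω * t) ^ 2
              + 8 * ω * (ω * t) * ((α + 2) * t - 2) := by
          have hy : ω * t / ((α + 2) * t - 2) * ((α + 2) * t - 2) = ω * t := div_mul_cancel₀ _ hd0
          linear_combination (-8 * α * (ω * t / ((α + 2) * t - 2) * ((α + 2) * t - 2) + ω * t)
            + 8 * ω * ((α + 2) * t - 2)) * hy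
        rw [e]
        nlinarith [mul_pos (mul_pos (mul_pos (show (0:ℝ) < t by linarith)
          (show (0:ℝ) < t - 1 by linarith))
          (show (0:ℝ) < (α + 2) * t - 2 - 2 * ω by nlinarith))
          (show (0:ℝ) < (α + 2) * t - 2 + 2 * ω by nlinarith)]
      exact (mul_lt_mul_iff_left₀ (by positivity : (0:ℝ) < ((α + 2) * t - 2) ^ 2)).mp key
    have : h₁ (h₂ t) < t := by
      simp only [h₁, h₂]
      linarith
    linarith
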